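/- With the same setup of a g-natural metric G on TM determined by functions a₁,a₂,a₃,b₁,b₂,b₃ and with a(t), Fⱼ(t), F(t) defined as before, the metric G is positive definite at every point of TM if and only if a(t) > 0, F(t) > 0, a₁(t) > 0 and F₁(t) > 0 for all t ∈ [0,∞). -/
import Mathlib

open scoped RealInnerProductSpace

lemma key_quad (A C B P Q R : ℝ) (hA : 0 < A) (ha : 0 < A*C - B^2)
    (hP : 0 ≤ P) (hQ : 0 ≤ Q) (hR : R^2 ≤ P*Q) :
    0 ≤ C*P + 2*B*R + A*Q ∧ ((0 < P ∨ 0 < Q) → 0 < C*P + 2*B*R + A*Q) := by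
  have hPQ : 0 ≤ P*Q - R^2 := by linarith
  rcases eq_or_lt_of_le hP with h | h
  · have hR0 : R = 0 := by nlinarith [sq_nonneg R]
    refine ⟨by rw [← h, hR0]; nlinarith, ?_⟩
    rintro (h1 | h1)
    · rw [← h] at h1; exact absurd h1 (lt_irrefl 0)
    · rw [← h, hR0]; nlinarith
  · have key : 0 < C*P + 2*B*R + A*Q := by
      nlinarith [sq_nonneg (B*P + A*R), mul_pos ha (mul_pos h h),
        mul_nonneg (mul_nonneg hA.le hA.le) hPQ, mul_pos hA h]
    exact ⟨key.le, fun _ => key⟩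


lemma pair_ne_zero_right {E : Type*} [NormedAddCommGroup E] [Module ℝ E]
    (α β : ℝ) (w : E) (hw : w ≠ 0) (hβ : β ≠ 0) : (α • w, β • w) ≠ (0 : E × E) := by
  intro hc
  have h2 : β • w = 0 := congrArg Prod.snd hc
  rcases smul_eq_zero.mp h2 with h | h
  · exact hβ h
  · exact hw h

lemma pair_ne_zero_left {E : Type*} [NormedAddCommGroup E] [Module ℝ E]
    (α β : ℝ) (w : E) (hw : w ≠ 0) (hα : α ≠ 0) : (α • w, β • w) ≠ (0 : E × E) := by
  intro hc
  have h2 : α • w = 0 := congrArg Prod.fst hc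
  rcases smul_eq_zero.mp h2 with h | h
  · exact hα h
  · exact hw h

lemma my_inner_self_pos {E : Type*} [NormedAddCommGroup E] [InnerProductSpace ℝ E]
    {w : E} (hw : w ≠ 0) : 0 < ⟪w, w⟫ :=
  lt_of_le_of_ne real_inner_self_nonneg (fun hc => hw (inner_self_eq_zero.mp hc.symm))

lemma inner_decomp {E : Type*} [NormedAddCommGroup E] [InnerProductSpace ℝ E]
    (u w z : E) (t : ℝ) (htp : 0 < t) (ht : ⟪u, u⟫ = t) :
    ⟪w - (⟪w, u⟫/t) • u, z - (⟪z, u⟫/t) • u⟫ = ⟪w, z⟫ - ⟪w, u⟫ * ⟪z, u⟫ / t := by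
  simp only [inner_sub_left, inner_sub_right, real_inner_smul_left, real_inner_smul_right,
    real_inner_comm u w, real_inner_comm u z, ht]
  have htne : t ≠ 0 := ne_of_gt htp
  field_simp
  try ring

set_option maxHeartbeats 1600000

/-- A g-natural metric `G` on `TM` (horizontal ⊕ vertical block form over an
`n`-dimensional inner product space, `n ≥ 2`) is positive definite at every point
`(x,u)` iff `a t > 0`, `F t > 0`, `a₁ t > 0`, `F₁ t > 0` for all `t ∈ [0,∞)`. -/
theorem g_natural_metric_positive_definite_iff
    (n : ℕ) (hn : 2 ≤ n)
    (a₁ a₂ a₃ b₁ b₂ b₃ : ℝ → ℝ)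
    (a : ℝ → ℝ) (ha : ∀ t, a t = a₁ t * (a₁ t + a₃ t) - (a₂ t) ^ 2)
    (F₁ F₂ F₃ : ℝ → ℝ)
    (hF₁ : ∀ t, F₁ t = a₁ t + t * b₁ t)
    (hF₂ : ∀ t, F₂ t = a₂ t + t * b₂ t)
    (hF₃ : ∀ t, F₃ t = a₃ t + t * b₃ t)
    (F : ℝ → ℝ) (hF : ∀ t, F t = F₁ t * (F₁ t + F₃ t) - (F₂ t) ^ 2)
    (G : EuclideanSpace ℝ (Fin n) →
         (EuclideanSpace ℝ (Fin n) × EuclideanSpace ℝ (Fin n)) →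
         (EuclideanSpace ℝ (Fin n) × EuclideanSpace ℝ (Fin n)) → ℝ)
    (hG : ∀ (u : EuclideanSpace ℝ (Fin n)) Z W, G u Z W =
      (a₁ ⟪u, u⟫ + a₃ ⟪u, u⟫) * ⟪Z.1, W.1⟫
      + (b₁ ⟪u, u⟫ + b₃ ⟪u, u⟫) * ⟪Z.1, u⟫ * ⟪W.1, u⟫
      + a₂ ⟪u, u⟫ * (⟪Z.1, W.2⟫ + ⟪Z.2, W.1⟫)
      + b₂ ⟪u, u⟫ * (⟪Z.1, u⟫ * ⟪W.2, u⟫ + ⟪Z.2, u⟫ * ⟪W.1, u⟫)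
      + a₁ ⟪u, u⟫ * ⟪Z.2, W.2⟫ + b₁ ⟪u, u⟫ * ⟪Z.2, u⟫ * ⟪W.2, u⟫) :
    (∀ (u : EuclideanSpace ℝ (Fin n)) Z, Z ≠ 0 → 0 < G u Z Z) ↔
      (∀ t, 0 ≤ t → 0 < a t ∧ 0 < F t ∧ 0 < a₁ t ∧ 0 < F₁ t) := by
  constructor
  · -- forward direction
    intro hpos t ht
    set i0 : Fin n := ⟨0, by omega⟩
    set i1 : Fin n := ⟨1, by omega⟩
    set u : EuclideanSpace ℝ (Fin n) := EuclideanSpace.single i0 (Real.sqrt t) with hu_def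
    set e : EuclideanSpace ℝ (Fin n) := EuclideanSpace.single i1 1 with he_def
    have hu : ⟪u, u⟫ = t := by
      rw [hu_def, EuclideanSpace.inner_single_left]
      simp [EuclideanSpace.single_apply, Real.mul_self_sqrt ht]
    have heu : ⟪e, u⟫ = 0 := by
      rw [he_def, EuclideanSpace.inner_single_left]
      simp [hu_def, EuclideanSpace.single_apply, i0, i1, Fin.ext_iff]
    have hue : ⟪u, e⟫ = 0 := by rw [real_inner_comm]; exact heu
    have hee : ⟪e, e⟫ = 1 := by
      rw [he_def, EuclideanSpace.inner_single_left]
      simp [EuclideanSpace.single_apply]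
    have he0 : e ≠ 0 := by
      intro h0
      have : e i1 = 0 := by rw [h0]; rfl
      rw [he_def] at this
      simp [EuclideanSpace.single_apply] at this
    have hu0 : 0 < t → u ≠ 0 := by
      intro htp h0
      have : u i0 = 0 := by rw [h0]; rfl
      rw [hu_def] at this
      simp [EuclideanSpace.single_apply] at this
      exact absurd this (by positivity)
    have q1 : ∀ α β : ℝ, G u (α • e, β • e) (α • e, β • e) =
        (a₁ t + a₃ t) * α^2 + 2 * a₂ t * α * β + a₁ t * β^2 := by
      intro α β
      rw [hG]
      simp only [real_inner_smul_left, real_inner_smul_right, hu, heu, hue, hee]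
      ring
    have q2 : ∀ α β : ℝ, G u (α • u, β • u) (α • u, β • u) =
        t * ((F₁ t + F₃ t) * α^2 + 2 * F₂ t * α * β + F₁ t * β^2) := by
      intro α β
      rw [hG]
      simp only [real_inner_smul_left, real_inner_smul_right, hu]
      rw [hF₁, hF₂, hF₃]
      ring
    -- a₁ t > 0
    have h1 : 0 < a₁ t := by
      have hne := pair_ne_zero_right (0:ℝ) (1:ℝ) e he0 one_ne_zero
      have := hpos u _ hne
      rw [q1] at this
      nlinarith [this]
    -- a₁ t + a₃ t > 0
    have h13 : 0 < a₁ t + a₃ t := by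
      have hne := pair_ne_zero_left (1:ℝ) (0:ℝ) e he0 one_ne_zero
      have := hpos u _ hne
      rw [q1] at this
      nlinarith [this]
    -- a t > 0
    have hat : 0 < a t := by
      have hβ : -(a₁ t + a₃ t) ≠ 0 := by intro hc; nlinarith
      have hne := pair_ne_zero_right (a₂ t) (-(a₁ t + a₃ t)) e he0 hβ
      have := hpos u _ hne
      rw [q1] at this
      rw [ha]
      nlinarith [this]
    refine ⟨hat, ?_, h1, ?_⟩
    · -- F t > 0
      rcases eq_or_lt_of_le ht with h0 | htp
      · subst h0
        rw [ha] at hat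
        rw [hF, hF₁, hF₂, hF₃]
        ring_nf
        ring_nf at hat
        nlinarith [hat]
      · have hF1t : 0 < F₁ t := by
          have hne := pair_ne_zero_right (0:ℝ) (1:ℝ) u (hu0 htp) one_ne_zero
          have := hpos u _ hne
          rw [q2] at this
          nlinarith [this, mul_pos htp htp]
        have hF13 : 0 < F₁ t + F₃ t := by
          have hne := pair_ne_zero_left (1:ℝ) (0:ℝ) u (hu0 htp) one_ne_zero
          have := hpos u _ hne
          rw [q2] at this
          nlinarith [this]
        have hβ : -(F₁ t + F₃ t) ≠ 0 := by intro hc; nlinarith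
        have hne := pair_ne_zero_right (F₂ t) (-(F₁ t + F₃ t)) u (hu0 htp) hβ
        have := hpos u _ hne
        rw [q2] at this
        rw [hF]
        nlinarith [this, mul_pos htp hF13]
    · -- F₁ t > 0
      rcases eq_or_lt_of_le ht with h0 | htp
      · subst h0
        rw [hF₁]
        simpa using h1
      · have hne := pair_ne_zero_right (0:ℝ) (1:ℝ) u (hu0 htp) one_ne_zero
        have := hpos u _ hne
        rw [q2] at this
        nlinarith [this, mul_pos htp htp]
  · -- reverse direction
    intro hcond u Z hZ
    obtain ⟨h, v⟩ := Z
    set t : ℝ := ⟪u, u⟫ with ht_def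
    have ht : 0 ≤ t := real_inner_self_nonneg
    obtain ⟨hat, hFt, h1t, hF1t⟩ := hcond t ht
    rw [ha] at hat
    rw [hF] at hFt
    have hhv : h ≠ 0 ∨ v ≠ 0 := by
      by_contra hc
      push_neg at hc
      exact hZ (by simp [Prod.ext_iff, hc.1, hc.2])
    rw [hG]
    rcases eq_or_lt_of_le ht with h0 | htp
    · -- t = 0, so u = 0
      have ht0 : t = 0 := h0.symm
      have hu0 : u = 0 := inner_self_eq_zero.mp (by rw [← ht_def, ht0])
      rw [ht0] at hat h1t
      have hCS : ⟪h, v⟫ ^ 2 ≤ ⟪h, h⟫ * ⟪v, v⟫ := by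
        have := real_inner_mul_inner_self_le h v
        nlinarith [this]
      obtain ⟨_, hstrict⟩ := key_quad (a₁ 0) (a₁ 0 + a₃ 0) (a₂ 0) ⟪h,h⟫ ⟪v,v⟫ ⟪h,v⟫
        h1t (by nlinarith) real_inner_self_nonneg real_inner_self_nonneg hCS
      have hPQpos : 0 < ⟪h,h⟫ ∨ 0 < ⟪v,v⟫ := by
        rcases hhv with hh | hv
        · exact Or.inl (my_inner_self_pos hh)
        · exact Or.inr (my_inner_self_pos hv)
      have hmain := hstrict hPQpos
      have hcm : ⟪v, h⟫ = ⟪h, v⟫ := real_inner_comm h v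
      simp only [hu0, inner_zero_right, inner_zero_left]
      rw [hcm]
      nlinarith [hmain]
    · -- t > 0
      have htne : t ≠ 0 := ne_of_gt htp
      set x : ℝ := ⟪h, u⟫ with hx_def
      set y : ℝ := ⟪v, u⟫ with hy_def
      set h' : EuclideanSpace ℝ (Fin n) := h - (x/t) • u with hh'_def
      set v' : EuclideanSpace ℝ (Fin n) := v - (y/t) • u with hv'_def
      have hP0 := inner_decomp u h h t htp ht_def.symm
      have hQ0 := inner_decomp u v v t htp ht_def.symm
      have hR0 := inner_decomp u h v t htp ht_def.symm
      rw [← hx_def, ← hh'_def] at hP0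
      rw [← hy_def, ← hv'_def] at hQ0
      rw [← hx_def, ← hy_def, ← hh'_def, ← hv'_def] at hR0
      have hCS : ⟪h', v'⟫ ^ 2 ≤ ⟪h', h'⟫ * ⟪v', v'⟫ := by
        have := real_inner_mul_inner_self_le h' v'
        nlinarith [this]
      obtain ⟨hS1nn, hS1⟩ := key_quad (a₁ t) (a₁ t + a₃ t) (a₂ t) ⟪h',h'⟫ ⟪v',v'⟫ ⟪h',v'⟫
        h1t (by nlinarith) real_inner_self_nonneg real_inner_self_nonneg hCS
      obtain ⟨hS2nn, hS2⟩ := key_quad (F₁ t) (F₁ t + F₃ t) (F₂ t) (x^2) (y^2) (x*y)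
        hF1t (by nlinarith) (sq_nonneg x) (sq_nonneg y) (by ring_nf; exact le_refl _)
      have hhh : ⟪h, h⟫ = ⟪h', h'⟫ + x^2/t := by rw [hP0]; ring
      have hvv : ⟪v, v⟫ = ⟪v', v'⟫ + y^2/t := by rw [hQ0]; ring
      have hhv2 : ⟪h, v⟫ = ⟪h', v'⟫ + x*y/t := by rw [hR0]; ring
      have hvh : ⟪v, h⟫ = ⟪h', v'⟫ + x*y/t := by rw [← real_inner_comm v h]; exact hhv2
      simp only [← ht_def, hhh, hvv, hhv2, hvh]
      have hexpand : (a₁ t + a₃ t) * (⟪h',h'⟫ + x^2/t) + (b₁ t + b₃ t) * x * x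
          + a₂ t * ((⟪h',v'⟫ + x*y/t) + (⟪h',v'⟫ + x*y/t)) + b₂ t * (x * y + y * x)
          + a₁ t * (⟪v',v'⟫ + y^2/t) + b₁ t * y * y
          = ((a₁ t + a₃ t) * ⟪h',h'⟫ + 2 * a₂ t * ⟪h',v'⟫ + a₁ t * ⟪v',v'⟫)
            + ((F₁ t + F₃ t) * x^2 + 2 * F₂ t * (x*y) + F₁ t * y^2) / t := by
        rw [hF₁, hF₂, hF₃]
        field_simp
        ring
      rw [hexpand]
      have hkey : (0 < ⟪h',h'⟫ ∨ 0 < ⟪v',v'⟫) ∨ (0 < x^2 ∨ 0 < y^2) := by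
        rcases hhv with hh | hv
        · have hpos2 : 0 < ⟪h, h⟫ := my_inner_self_pos hh
          rw [hhh] at hpos2
          by_cases hx0 : x = 0
          · left; left
            rw [hx0] at hpos2
            simpa using hpos2
          · right; left; positivity
        · have hpos2 : 0 < ⟪v, v⟫ := my_inner_self_pos hv
          rw [hvv] at hpos2
          by_cases hy0 : y = 0
          · left; right
            rw [hy0] at hpos2
            simpa using hpos2
          · right; right; positivity
      rcases hkey with hk | hk
      · have hs := hS1 hk
        have h2 : 0 ≤ ((F₁ t + F₃ t) * x^2 + 2 * F₂ t * (x*y) + F₁ t * y^2) / t :=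
          div_nonneg hS2nn htp.le
        linarith
      · have hs := hS2 hk
        have h2 : 0 < ((F₁ t + F₃ t) * x^2 + 2 * F₂ t * (x*y) + F₁ t * y^2) / t :=
          div_pos hs htp
        linarith
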